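/- For 0 < δ < 1, ν = (1-√δ)/(1+√δ), and θ ∈ (-1/2, 1/2), the identity tan( (π/2)(2θ - h_{1/ν}(θ) - h_ν(θ)) ) = δ sin(2πθ) / (1 + δ cos(2πθ)) holds. -/

import Mathlib

open Real

noncomputable def h (ν θ : ℝ) : ℝ :=
  (2 / π) * arctan (((ν + 1) * tan (π * θ / 2) + (ν - 1)) /
    ((ν - 1) * tan (π * θ / 2) + (ν + 1)))

set_option maxHeartbeats 2000000 in
theorem tan_double_diff (δ : ℝ) (hδ : 0 < δ) (hδ1 : δ < 1)
    (θ : ℝ) (hθ : θ ∈ Set.Ioo (-(1:ℝ)/2) (1/2)) :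
    tan (π / 2 * (2 * θ - h (1 / ((1 - Real.sqrt δ) / (1 + Real.sqrt δ))) θ
        - h ((1 - Real.sqrt δ) / (1 + Real.sqrt δ)) θ)) =
      δ * sin (2 * π * θ) / (1 + δ * cos (2 * π * θ)) := by
  obtain ⟨hθ1, hθ2⟩ := hθ
  have hπ : (0:ℝ) < π := pi_pos
  set s := Real.sqrt δ with hs
  have hs0 : 0 < s := Real.sqrt_pos.mpr hδ
  have hs1 : s < 1 := by
    rw [hs, show (1:ℝ) = Real.sqrt 1 by simp]
    exact Real.sqrt_lt_sqrt hδ.le hδ1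
  have hδs : δ = s^2 := (Real.sq_sqrt hδ.le).symm
  have hA1 : -(π/4) < π * θ / 2 := by nlinarith
  have hA2 : π * θ / 2 < π/4 := by nlinarith
  set t := Real.tan (π * θ / 2) with ht
  have ht1 : t < 1 := by
    rw [ht, ← Real.tan_pi_div_four]
    exact Real.strictMonoOn_tan ⟨by nlinarith, by nlinarith⟩ ⟨by nlinarith, by nlinarith⟩ hA2
  have ht2 : -1 < t := by
    rw [ht, show (-1:ℝ) = Real.tan (-(π/4)) by rw [Real.tan_neg, Real.tan_pi_div_four]]
    exact Real.strictMonoOn_tan ⟨by nlinarith, by nlinarith⟩ ⟨by nlinarith, by nlinarith⟩ hA1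
  have hst1 : 0 < 1 - s * t := by nlinarith
  have hst2 : 0 < 1 + s * t := by nlinarith
  have hDpos : 0 < 1 + δ * Real.cos (2*π*θ) := by
    have h1 : (0:ℝ) ≤ Real.cos (2*π*θ) + 1 := by linarith [Real.neg_one_le_cos (2*π*θ)]
    nlinarith [mul_nonneg hδ.le h1]
  have hM : 0 < (1+s^2)*(1-t^2)^2 + 4*t^2*(1-s^2) := by
    have h1 : (0:ℝ) < 1 - t^2 := by nlinarith
    have h2 : (0:ℝ) < (1+s^2)*(1-t^2)^2 := by positivity
    have h3 : (0:ℝ) ≤ 4*t^2*(1-s^2) := by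
      have : (0:ℝ) ≤ 1 - s^2 := by nlinarith
      positivity
    linarith
  have hps : (0:ℝ) < 1 + s := by linarith
  have hms : (0:ℝ) < 1 - s := by linarith
  set a := (t - s) / (1 - s * t) with ha
  set b := (t + s) / (1 + s * t) with hb
  have hha : h ((1 - s) / (1 + s)) θ = 2 / π * Real.arctan a := by
    unfold h
    rw [← ht]
    congr 2
    have hd : ((1 - s) / (1 + s) - 1) * t + ((1 - s) / (1 + s) + 1) = 2 * (1 - s*t) / (1+s) := by
      field_simp; ring
    rw [ha, hd, div_eq_div_iff (by positivity) hst1.ne']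
    field_simp
    ring
  have hhb : h (1 / ((1 - s) / (1 + s))) θ = 2 / π * Real.arctan b := by
    unfold h
    rw [← ht, one_div_div]
    congr 2
    have hd : ((1 + s) / (1 - s) - 1) * t + ((1 + s) / (1 - s) + 1) = 2 * (1 + s*t) / (1-s) := by
      field_simp; ring
    rw [hb, hd, div_eq_div_iff (by positivity) hst2.ne']
    field_simp
    ring
  rw [hhb, hha]
  have hangle : π / 2 * (2 * θ - 2 / π * Real.arctan b - 2 / π * Real.arctan a)
      = π * θ - Real.arctan b - Real.arctan a := by
    field_simp
  rw [hangle]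
  set u := Real.arctan a with hu
  set v := Real.arctan b with hv
  have hw1 : (0:ℝ) < Real.sqrt (1 + a^2) := by positivity
  have hw2 : (0:ℝ) < Real.sqrt (1 + b^2) := by positivity
  have hsu : Real.sin u = a / Real.sqrt (1 + a^2) := Real.sin_arctan a
  have hcu : Real.cos u = 1 / Real.sqrt (1 + a^2) := Real.cos_arctan a
  have hsv : Real.sin v = b / Real.sqrt (1 + b^2) := Real.sin_arctan b
  have hcv : Real.cos v = 1 / Real.sqrt (1 + b^2) := Real.cos_arctan b
  have hcA : 0 < Real.cos (π * θ / 2) := Real.cos_pos_of_mem_Ioo ⟨by nlinarith, by nlinarith⟩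
  have h1t : (0:ℝ) < 1 + t^2 := by positivity
  have hsinA : Real.sin (π*θ/2) = t * Real.cos (π*θ/2) := by
    rw [ht, Real.tan_eq_sin_div_cos]
    field_simp
  have hc2 : Real.cos (π * θ / 2)^2 * (1 + t^2) = 1 := by
    have h1 := Real.sin_sq_add_cos_sq (π * θ / 2)
    linear_combination h1 - (Real.sin (π*θ/2) + t * Real.cos (π*θ/2)) * hsinA
  have hP : Real.sin (π*θ) = 2*t/(1+t^2) := by
    rw [show π*θ = 2*(π*θ/2) by ring, Real.sin_two_mul, hsinA, eq_div_iff h1t.ne']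
    linear_combination 2 * t * hc2
  have hQ : Real.cos (π*θ) = (1-t^2)/(1+t^2) := by
    rw [show π*θ = 2*(π*θ/2) by ring, Real.cos_two_mul, eq_div_iff h1t.ne']
    linear_combination 2 * hc2
  have hsinE : Real.sin (π*θ - v - u) =
      (Real.sin (π*θ) - Real.cos (π*θ)*b - Real.cos (π*θ)*a - Real.sin (π*θ)*a*b)
        / (Real.sqrt (1+b^2) * Real.sqrt (1+a^2)) := by
    simp only [Real.sin_sub, Real.cos_sub, hsu, hcu, hsv, hcv]
    field_simp
    ring
  have hcosE : Real.cos (π*θ - v - u) =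
      (Real.cos (π*θ) + Real.sin (π*θ)*b + Real.sin (π*θ)*a - Real.cos (π*θ)*a*b)
        / (Real.sqrt (1+b^2) * Real.sqrt (1+a^2)) := by
    simp only [Real.sin_sub, Real.cos_sub, hsu, hcu, hsv, hcv]
    field_simp
    ring
  have hYeq : Real.cos (π*θ) + Real.sin (π*θ)*b + Real.sin (π*θ)*a - Real.cos (π*θ)*a*b
      = ((1+s^2)*(1-t^2)^2 + 4*t^2*(1-s^2)) / ((1+t^2)*((1-s*t)*(1+s*t))) := by
    rw [hP, hQ, ha, hb]
    have : 1 + t * s ≠ 0 := by linarith [mul_comm s t]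
    have : 1 - t * s ≠ 0 := by linarith [mul_comm s t]
    field_simp
    ring
  have hYpos : 0 < Real.cos (π*θ) + Real.sin (π*θ)*b + Real.sin (π*θ)*a - Real.cos (π*θ)*a*b := by
    rw [hYeq]
    exact div_pos hM (by positivity)
  have hsin2 : Real.sin (2*π*θ) = 2 * Real.sin (π*θ) * Real.cos (π*θ) := by
    rw [show 2*π*θ = 2*(π*θ) by ring, Real.sin_two_mul]
  have hcos2 : Real.cos (2*π*θ) = 2 * Real.cos (π*θ)^2 - 1 := by
    rw [show 2*π*θ = 2*(π*θ) by ring, Real.cos_two_mul]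
  have hw : (0:ℝ) < Real.sqrt (1+b^2) * Real.sqrt (1+a^2) := by positivity
  have cancel : ∀ (w X Y : ℝ), w ≠ 0 → (X / w) / (Y / w) = X / Y := by
    intro w X Y hw0
    rw [div_div_div_comm, div_self hw0, div_one]
  have hNeq : Real.sin (π*θ) - Real.cos (π*θ)*b - Real.cos (π*θ)*a - Real.sin (π*θ)*a*b
      = (4*s^2*t*(1-t^2)) / ((1+t^2)*((1-s*t)*(1+s*t))) := by
    rw [hP, hQ, ha, hb]
    have : 1 + t * s ≠ 0 := by linarith [mul_comm s t]
    have : 1 - t * s ≠ 0 := by linarith [mul_comm s t]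
    field_simp
    ring
  have hD0 : ((1:ℝ)+t^2)*((1-s*t)*(1+s*t)) ≠ 0 :=
    ne_of_gt (mul_pos h1t (mul_pos hst1 hst2))
  have htanE : Real.tan (π*θ - v - u)
      = (4*s^2*t*(1-t^2)) / ((1+s^2)*(1-t^2)^2 + 4*t^2*(1-s^2)) := by
    rw [Real.tan_eq_sin_div_cos, hsinE, hcosE, cancel _ _ _ hw.ne', hNeq, hYeq,
      cancel _ _ _ hD0]
  rw [htanE, hδs, hsin2, hcos2, hP, hQ]
  have hDpos' : 0 < 1 + s^2 * (2*((1-t^2)/(1+t^2))^2 - 1) := by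
    have h0 := hDpos
    rw [hδs, hcos2, hQ] at h0
    exact h0
  rw [div_eq_div_iff hM.ne' hDpos'.ne']
  field_simp
  ring
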